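/- Let f : ℝⁿ → ℝ be continuously differentiable and bounded below along the ray {x_k + α d_k : α > 0}, and suppose d_k is a descent direction (g_kᵀ d_k < 0). Then there exists a step size α_k > 0 satisfying the modified Wolfe conditions: f(x_k + α_k d_k) ≤ f(x_k) + ρ α_k g_kᵀ d_k and (g(x_k + α_k d_k) + min{t_k, 0} s_k)ᵀ d_k ≥ σ g_kᵀ d_k, where 0 < ρ < σ < 1, s_k = α_k d_k, and t_k = C μ_k/‖s_k‖² when μ_k ≤ 0, t_k ≥ 0 otherwise, with C = (σ-ρ)/(1-2ρ+σ) and μ_k = 2(f(x_k) - f(x_k + α_k d_k)) + (g(x_k) + g(x_k + α_k d_k))ᵀ s_k. -/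

import Mathlib

open scoped RealInnerProductSpace

/-- Existence of a step size for the modified Wolfe line search: if `f` is continuously
differentiable, bounded below along the ray `{x_k + α d_k : α > 0}`, and `d_k` is a descent
direction, then there exists `α_k > 0` satisfying the modified Wolfe conditions. -/
private lemma wolfe_aux (ρ σ L μ ξ nd : ℝ) (hρ : 0 < ρ) (hρσ : ρ < σ) (hσ : σ < 1)
    (hL : L < 0) (hξ : 0 < ξ) (hnd : 0 < nd) (hμ : μ ≤ 0) (hμlb : ξ * (1 - ρ) * L ≤ μ) :
    ρ * L + (σ - ρ) / (1 - 2 * ρ + σ) * μ / (ξ ^ 2 * nd) * ξ * nd ≥ σ * L := by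
  have hD : (0 : ℝ) < 1 - 2 * ρ + σ := by linarith
  have hC : (0 : ℝ) ≤ (σ - ρ) / (1 - 2 * ρ + σ) := div_nonneg (by linarith) hD.le
  set C : ℝ := (σ - ρ) / (1 - 2 * ρ + σ) with hCdef
  have hCexp : C * μ / (ξ ^ 2 * nd) * ξ * nd = C * μ / ξ := by
    field_simp
  rw [hCexp]
  have hCμ : C * (1 - ρ) * L ≤ C * μ / ξ := by
    rw [le_div_iff₀ hξ]
    nlinarith [mul_le_mul_of_nonneg_left hμlb hC]
  have hCbound : C * (1 - ρ) ≤ σ - ρ := by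
    rw [hCdef, div_mul_eq_mul_div, div_le_iff₀ hD]
    nlinarith
  nlinarith [mul_nonneg (sub_nonneg.mpr hCbound) (neg_nonneg.mpr hL.le)]

theorem stmt_5 {n : ℕ} (f : EuclideanSpace ℝ (Fin n) → ℝ)
    (hf : ContDiff ℝ 1 f)
    (xk dk : EuclideanSpace ℝ (Fin n)) (ρ σ : ℝ)
    (hρ : 0 < ρ) (hρσ : ρ < σ) (hσ : σ < 1)
    (hbdd : ∃ B : ℝ, ∀ α : ℝ, 0 < α → B ≤ f (xk + α • dk))
    (hdesc : ⟪gradient f xk, dk⟫ < 0) :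
    ∃ α : ℝ, 0 < α ∧
      f (xk + α • dk) ≤ f xk + ρ * α * ⟪gradient f xk, dk⟫ ∧
      ∀ t : ℝ,
        ((2 * (f xk - f (xk + α • dk)) +
            ⟪gradient f xk + gradient f (xk + α • dk), α • dk⟫ ≤ 0 →
          t = ((σ - ρ) / (1 - 2 * ρ + σ)) *
            (2 * (f xk - f (xk + α • dk)) +
              ⟪gradient f xk + gradient f (xk + α • dk), α • dk⟫) / ‖α • dk‖ ^ 2) ∧
         (0 < 2 * (f xk - f (xk + α • dk)) +
            ⟪gradient f xk + gradient f (xk + α • dk), α • dk⟫ → 0 ≤ t)) →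
        ⟪gradient f (xk + α • dk) + min t 0 • (α • dk), dk⟫ ≥
          σ * ⟪gradient f xk, dk⟫ := by
  classical
  have hfd : Differentiable ℝ f := hf.differentiable one_ne_zero
  -- bridge between gradient and fderiv
  have key : ∀ x v : EuclideanSpace ℝ (Fin n), ⟪gradient f x, v⟫ = fderiv ℝ f x v := by
    intro x v
    rw [gradient, InnerProductSpace.toDual_symm_apply]
  set L : ℝ := ⟪gradient f xk, dk⟫ with hLdef
  obtain ⟨B, hB⟩ := hbdd
  set c : ℝ → EuclideanSpace ℝ (Fin n) := fun α => xk + α • dk with hcdef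
  have hcd : ∀ α : ℝ, HasDerivAt c dk α := by
    intro α
    have h1 : HasDerivAt (fun α : ℝ => α • dk) ((1 : ℝ) • dk) α :=
      (hasDerivAt_id α).smul_const dk
    simpa [hcdef, one_smul] using h1.const_add xk
  set φ : ℝ → ℝ := fun α => f (c α) - f xk - ρ * L * α with hφdef
  have hφd : ∀ α : ℝ, HasDerivAt φ (fderiv ℝ f (c α) dk - ρ * L) α := by
    intro α
    have h1 : HasDerivAt (fun α => f (c α)) (fderiv ℝ f (c α) dk) α :=
      (hfd (c α)).hasFDerivAt.comp_hasDerivAt α (hcd α)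
    have h2 : HasDerivAt (fun α : ℝ => ρ * L * α) (ρ * L) α := by
      simpa using (hasDerivAt_id α).const_mul (ρ * L)
    exact (h1.sub_const (f xk)).sub h2
  have hφcont : Continuous φ := by
    have : Continuous c := by
      fun_prop
    exact ((hf.continuous.comp this).sub continuous_const).sub
      (continuous_const.mul continuous_id)
  have hc0 : c 0 = xk := by simp [hcdef]
  have hL0 : L < 0 := hdesc
  -- the derivative of φ at 0 is negative
  have hder0 : HasDerivAt φ ((1 - ρ) * L) 0 := by
    have := hφd 0
    rw [hc0] at this
    have hfx : fderiv ℝ f xk dk = L := (key xk dk).symm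
    rw [hfx] at this
    convert this using 1; ring
  have hneg : (1 - ρ) * L < 0 := mul_neg_of_pos_of_neg (by linarith) hL0
  -- find small α₁ > 0 with φ α₁ < 0
  have hφ0 : φ 0 = 0 := by simp [hφdef, hc0]
  obtain ⟨α₁, hα₁pos, hφα₁⟩ : ∃ α₁ : ℝ, 0 < α₁ ∧ φ α₁ < 0 := by
    have hslope := hasDerivAt_iff_tendsto_slope.mp hder0
    have h1 : ∀ᶠ b in nhdsWithin (0 : ℝ) {(0 : ℝ)}ᶜ, slope φ 0 b < 0 :=
      hslope.eventually (gt_mem_nhds hneg)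
    have h2 : ∀ᶠ b in nhdsWithin (0 : ℝ) (Set.Ioi 0), slope φ 0 b < 0 :=
      h1.filter_mono (nhdsWithin_mono _ (fun x hx => ne_of_gt hx))
    have h3 : ∀ᶠ b in nhdsWithin (0 : ℝ) (Set.Ioi 0), 0 < b :=
      eventually_mem_nhdsWithin
    obtain ⟨b, hb1, hb2⟩ := (h2.and h3).exists
    refine ⟨b, hb2, ?_⟩
    rw [slope_def_field, hφ0, sub_zero, sub_zero] at hb1
    exact ((div_neg_iff.mp hb1).elim (fun h => absurd h.2 (not_lt.mpr hb2.le)) And.left)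
  -- find large α₀ with φ α₀ > 0
  set α₀ : ℝ := max (α₁ + 1) ((B - f xk - 1) / (ρ * L)) with hα₀def
  have hρL : ρ * L < 0 := mul_neg_of_pos_of_neg hρ hL0
  have hα₀pos : 0 < α₀ := lt_of_lt_of_le (by linarith) (le_max_left _ _)
  have hα₁α₀ : α₁ < α₀ := lt_of_lt_of_le (by linarith) (le_max_left _ _)
  have hφα₀ : 0 < φ α₀ := by
    have h1 : (B - f xk - 1) / (ρ * L) ≤ α₀ := le_max_right _ _
    have h2 : ρ * L * α₀ ≤ B - f xk - 1 := by
      rw [div_le_iff_of_neg hρL] at h1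
      linarith [h1]
    have h3 : B ≤ f (c α₀) := hB α₀ hα₀pos
    simp only [hφdef]
    linarith
  -- minimize φ on [0, α₀]
  obtain ⟨ξ, hξmem, hξmin⟩ :=
    isCompact_Icc.exists_isMinOn (Set.nonempty_Icc.mpr hα₀pos.le)
      (hφcont.continuousOn : ContinuousOn φ (Set.Icc 0 α₀))
  have hα₁mem : α₁ ∈ Set.Icc (0 : ℝ) α₀ := ⟨hα₁pos.le, hα₁α₀.le⟩
  have hφξ : φ ξ < 0 := lt_of_le_of_lt (hξmin hα₁mem) hφα₁
  have hξpos : 0 < ξ := by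
    rcases lt_or_eq_of_le hξmem.1 with h | h
    · exact h
    · exfalso; rw [← h, hφ0] at hφξ; exact lt_irrefl 0 hφξ
  have hξlt : ξ < α₀ := by
    rcases lt_or_eq_of_le hξmem.2 with h | h
    · exact h
    · exfalso; rw [h] at hφξ; linarith
  -- ξ is an interior local min, so φ'(ξ) = 0
  have hloc : IsLocalMin φ ξ :=
    hξmin.isLocalMin (Icc_mem_nhds hξpos hξlt)
  have hderiv0 : fderiv ℝ f (c ξ) dk - ρ * L = 0 := hloc.hasDerivAt_eq_zero (hφd ξ)
  set G : ℝ := ⟪gradient f (c ξ), dk⟫ with hGdef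
  have hG : G = ρ * L := by
    rw [hGdef, key]; linarith [hderiv0]
  -- Armijo at ξ
  have hArm : f (c ξ) ≤ f xk + ρ * L * ξ := by
    have := hφξ; simp only [hφdef] at this; linarith
  have hdk : dk ≠ 0 := by
    intro h
    have : L = 0 := by rw [hLdef, h]; simp
    linarith
  have hdknorm : (0 : ℝ) < ‖dk‖ := norm_pos_iff.mpr hdk
  refine ⟨ξ, hξpos, by rw [hLdef] at hArm ⊢; linarith [hArm], ?_⟩
  intro t ht
  -- abbreviations in the goal
  have hμ : ⟪gradient f xk + gradient f (c ξ), ξ • dk⟫ = ξ * (L + G) := by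
    rw [real_inner_smul_right, inner_add_left]
  have hnorm : ‖ξ • dk‖ ^ 2 = ξ ^ 2 * ‖dk‖ ^ 2 := by
    rw [norm_smul, Real.norm_eq_abs, mul_pow, sq_abs]
  have hgoal : ⟪gradient f (c ξ) + min t 0 • (ξ • dk), dk⟫
      = G + min t 0 * ξ * ‖dk‖ ^ 2 := by
    rw [inner_add_left, smul_smul, real_inner_smul_left, real_inner_self_eq_norm_sq]
  set μ : ℝ := 2 * (f xk - f (c ξ)) + ⟪gradient f xk + gradient f (c ξ), ξ • dk⟫ with hμdef
  obtain ⟨ht1, ht2⟩ := ht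
  show ⟪gradient f (c ξ) + min t 0 • (ξ • dk), dk⟫ ≥ σ * L
  rw [hgoal]
  have hμlb : ξ * (1 - ρ) * L ≤ μ := by
    rw [hμdef, hμ, hG]
    nlinarith [hArm]
  have hD : (0 : ℝ) < 1 - 2 * ρ + σ := by linarith
  have hC : (0 : ℝ) ≤ (σ - ρ) / (1 - 2 * ρ + σ) := div_nonneg (by linarith) hD.le
  rcases le_or_gt μ 0 with hμsign | hμsign
  · -- μ ≤ 0 case
    have htval : t = ((σ - ρ) / (1 - 2 * ρ + σ)) * μ / ‖ξ • dk‖ ^ 2 := ht1 hμsign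
    have htnonpos : t ≤ 0 := by
      rw [htval]
      apply div_nonpos_of_nonpos_of_nonneg
      · exact mul_nonpos_of_nonneg_of_nonpos hC hμsign
      · exact sq_nonneg _
    rw [min_eq_left htnonpos, htval, hnorm, hG]
    exact wolfe_aux ρ σ L μ ξ (‖dk‖ ^ 2) hρ hρσ hσ hL0 hξpos (by positivity) hμsign hμlb
  · -- μ > 0 case
    have htnn : 0 ≤ t := ht2 hμsign
    rw [min_eq_right htnn, hG]
    simp only [zero_mul, add_zero]
    exact (mul_lt_mul_of_neg_right hρσ hL0).le
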